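/- Let 1 ≤ p < ∞ and A ∈ C. Suppose there exist a positive integer N₀ and α > 2(5+2^{1−p})^{1/p} · inf_{0 ≤ s ≤ N₀}( ‖A−A_s‖_C + (s/N₀)‖A‖_C ) such that ‖χ_n^{2N₀} A χ_n^{N₀} c‖_p ≥ α‖χ_n^{N₀} c‖_p for all c ∈ ℓ^p(ℤ) and all n ∈ N₀ℤ. Then A has ℓ^p-stability: there exists C₁ > 0 with ‖Ac‖_p ≥ C₁‖c‖_p for all c ∈ ℓ^p(ℤ). -/

import Mathlib

open MeasureTheory ENNReal Filter

noncomputable def lpNorm (p : ℝ≥0∞) (c : ℤ → ℂ) : ℝ≥0∞ :=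
  eLpNorm c p Measure.count

noncomputable def rowSup (a : ℤ → ℤ → ℂ) (k : ℤ) : ℝ≥0∞ :=
  ⨆ j : ℤ, (‖a j (j - k)‖₊ : ℝ≥0∞)

noncomputable def normC (a : ℤ → ℤ → ℂ) : ℝ≥0∞ := ∑' k : ℤ, rowSup a k

noncomputable def matMul (a : ℤ → ℤ → ℂ) (c : ℤ → ℂ) : ℤ → ℂ :=
  fun j => ∑' j' : ℤ, a j j' * c j'

noncomputable def trunc (a : ℤ → ℤ → ℂ) (s : ℕ) : ℤ → ℤ → ℂ :=
  fun i j => if |i - j| < (s : ℤ) then a i j else 0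

noncomputable def chiProj (y : ℤ) (N : ℕ) (c : ℤ → ℂ) : ℤ → ℂ :=
  fun j => if |j - y| < (N : ℤ) then c j else 0

noncomputable def psi0 (x : ℝ) : ℝ := max (min (2 - 2 * |x|) 1) 0

noncomputable def Psi (n : ℤ) (N : ℕ) (c : ℤ → ℂ) : ℤ → ℂ :=
  fun j => (psi0 (((j - n : ℤ) : ℝ) / (N : ℝ)) : ℂ) * c j

section Psi0

lemma psi0_nonneg (x : ℝ) : 0 ≤ psi0 x := le_max_right _ _

lemma psi0_le_one (x : ℝ) : psi0 x ≤ 1 :=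
  max_le (le_trans (min_le_right _ _) le_rfl) zero_le_one

lemma psi0_eq_zero {x : ℝ} (h : 1 ≤ |x|) : psi0 x = 0 := by
  have : 2 - 2 * |x| ≤ 0 := by nlinarith
  simp only [psi0]
  rw [max_eq_right]
  exact le_trans (min_le_left _ _) this

lemma psi0_eq_one {x : ℝ} (h : |x| ≤ 1/2) : psi0 x = 1 := by
  have h2 : (1:ℝ) ≤ 2 - 2 * |x| := by nlinarith
  simp only [psi0]
  rw [min_eq_right h2, max_eq_left zero_le_one]

lemma psi0_lip (x y : ℝ) : |psi0 x - psi0 y| ≤ 2 * |x - y| := by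
  have h1 : |psi0 x - psi0 y| ≤ |min (2 - 2*|x|) 1 - min (2 - 2*|y|) 1| := by
    simpa [psi0] using abs_max_sub_max_le_abs (min (2 - 2*|x|) 1) (min (2 - 2*|y|) 1) 0
  have h2 : |min (2 - 2*|x|) 1 - min (2 - 2*|y|) 1| ≤ max |(2 - 2*|x|) - (2 - 2*|y|)| |(1:ℝ) - 1| :=
    abs_min_sub_min_le_max _ _ _ _
  have h3 : |(2 - 2*|x|) - (2 - 2*|y|)| ≤ 2 * |x - y| := by
    have := abs_abs_sub_abs_le_abs_sub x y
    rw [show (2 - 2*|x|) - (2 - 2*|y|) = -(2 * (|x| - |y|)) by ring, abs_neg, abs_mul]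
    rw [abs_of_nonneg (by norm_num : (0:ℝ) ≤ 2)]
    nlinarith [abs_nonneg (x - y), abs_nonneg (|x| - |y|)]
  have h4 : max |(2 - 2*|x|) - (2 - 2*|y|)| |(1:ℝ) - 1| ≤ 2 * |x - y| := by
    simp only [sub_self, abs_zero]
    exact max_le h3 (by positivity)
  linarith

end Psi0

section Mink
variable {q : ℝ} {ι : Type*}

lemma rpow_rpow_inv' (x : ℝ≥0∞) (hq : 0 < q) : (x ^ q) ^ (1/q) = x := by
  rw [← ENNReal.rpow_mul, mul_one_div_cancel hq.ne', ENNReal.rpow_one]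

lemma rpow_inv_rpow' (x : ℝ≥0∞) (hq : 0 < q) : (x ^ (1/q)) ^ q = x := by
  rw [← ENNReal.rpow_mul, one_div_mul_cancel hq.ne', ENNReal.rpow_one]

lemma mink2 (hq : 1 ≤ q) (f g : ι → ℝ≥0∞) :
    (∑' i, (f i + g i) ^ q) ^ (1/q) ≤ (∑' i, f i ^ q) ^ (1/q) + (∑' i, g i ^ q) ^ (1/q) := by
  have hq0 : (0:ℝ) < q := lt_of_lt_of_le one_pos hq
  set A := (∑' i, f i ^ q) ^ (1/q) + (∑' i, g i ^ q) ^ (1/q) with hA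
  have key : ∑' i, (f i + g i) ^ q ≤ A ^ q := by
    rw [ENNReal.tsum_eq_iSup_sum]
    refine iSup_le fun s => ?_
    have h1 : (∑ i ∈ s, (f i + g i) ^ q) ^ (1/q) ≤ A := by
      refine le_trans (ENNReal.Lp_add_le s f g hq) (add_le_add ?_ ?_) <;>
        exact ENNReal.rpow_le_rpow (ENNReal.sum_le_tsum s) (by positivity)
    calc ∑ i ∈ s, (f i + g i) ^ q = ((∑ i ∈ s, (f i + g i) ^ q) ^ (1/q)) ^ q :=
          (rpow_inv_rpow' _ hq0).symm
      _ ≤ A ^ q := ENNReal.rpow_le_rpow h1 hq0.le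
  calc (∑' i, (f i + g i) ^ q) ^ (1/q) ≤ (A ^ q) ^ (1/q) :=
        ENNReal.rpow_le_rpow key (by positivity)
    _ = A := rpow_rpow_inv' _ hq0

lemma minkF {κ : Type*} [DecidableEq κ] (hq : 1 ≤ q) (F : Finset κ) (f : κ → ι → ℝ≥0∞) :
    (∑' i, (∑ k ∈ F, f k i) ^ q) ^ (1/q) ≤ ∑ k ∈ F, (∑' i, f k i ^ q) ^ (1/q) := by
  have hq0 : (0:ℝ) < q := lt_of_lt_of_le one_pos hq
  induction F using Finset.induction with
  | empty => simp [ENNReal.zero_rpow_of_pos hq0, ENNReal.zero_rpow_of_pos (by positivity : (0:ℝ) < 1/q), hq0]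
  | insert _ _ hk ih =>
      rename_i k F'
      simp only [Finset.sum_insert hk]
      exact le_trans (mink2 hq _ _) (by gcongr)

lemma minkT (hq : 1 ≤ q) (f : ℤ → ℤ → ℝ≥0∞) :
    (∑' i, (∑' k, f k i) ^ q) ^ (1/q) ≤ ∑' k, (∑' i, f k i ^ q) ^ (1/q) := by
  have hq0 : (0:ℝ) < q := lt_of_lt_of_le one_pos hq
  set A := ∑' k, (∑' i, f k i ^ q) ^ (1/q) with hA
  have key : ∑' i, (∑' k, f k i) ^ q ≤ A ^ q := by
    have h1 : ∀ i, (∑' k, f k i) ^ q = ⨆ F : Finset ℤ, (∑ k ∈ F, f k i) ^ q := by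
      intro i
      rw [ENNReal.tsum_eq_iSup_sum]
      exact map_iSup (ENNReal.orderIsoRpow q hq0) _
    calc ∑' i, (∑' k, f k i) ^ q = ∫⁻ i, ⨆ F : Finset ℤ, (∑ k ∈ F, f k i) ^ q ∂Measure.count := by
          rw [lintegral_count]; exact tsum_congr h1
      _ = ⨆ F : Finset ℤ, ∫⁻ i, (∑ k ∈ F, f k i) ^ q ∂Measure.count := by
          refine lintegral_iSup_directed (fun F => (Measurable.of_discrete).aemeasurable) ?_
          have mono : Monotone (fun F : Finset ℤ => fun i => (∑ k ∈ F, f k i) ^ q) := by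
            intro F G hFG i
            exact ENNReal.rpow_le_rpow (Finset.sum_le_sum_of_subset hFG) hq0.le
          exact mono.directed_le
      _ ≤ A ^ q := by
          refine iSup_le fun F => ?_
          rw [lintegral_count]
          calc ∑' i, (∑ k ∈ F, f k i) ^ q
              = ((∑' i, (∑ k ∈ F, f k i) ^ q) ^ (1/q)) ^ q := (rpow_inv_rpow' _ hq0).symm
            _ ≤ A ^ q := ENNReal.rpow_le_rpow
                (le_trans (minkF hq F f) (ENNReal.sum_le_tsum F)) hq0.le
  calc (∑' i, (∑' k, f k i) ^ q) ^ (1/q) ≤ (A ^ q) ^ (1/q) :=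
        ENNReal.rpow_le_rpow key (by positivity)
    _ = A := rpow_rpow_inv' _ hq0

end Mink

section Nq
variable {q : ℝ}

noncomputable def nq (q : ℝ) (c : ℤ → ℂ) : ℝ≥0∞ := (∑' j, (‖c j‖₊ : ℝ≥0∞) ^ q) ^ (1/q)

lemma lpNorm_eq_nq {p : ℝ≥0∞} (hp : 1 ≤ p) (hp' : p ≠ ⊤) (c : ℤ → ℂ) :
    lpNorm p c = nq p.toReal c := by
  rw [_root_.lpNorm, eLpNorm_eq_lintegral_rpow_enorm_toReal (by positivity) hp', lintegral_count]
  rfl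

lemma nq_mono (hq : 0 < q) {f g : ℤ → ℂ} (h : ∀ j, (‖f j‖₊ : ℝ≥0∞) ≤ (‖g j‖₊ : ℝ≥0∞)) :
    nq q f ≤ nq q g := by
  unfold nq
  gcongr with j
  exact_mod_cast h j

lemma enn_tsum_le (f : ℤ → ℂ) : (‖∑' i, f i‖₊ : ℝ≥0∞) ≤ ∑' i, (‖f i‖₊ : ℝ≥0∞) := by
  by_cases hs : Summable fun i => ‖f i‖₊
  · have hs' : Summable fun i => ‖f i‖ := NNReal.summable_coe.2 hs
    have h := norm_tsum_le_tsum_norm hs'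
    rw [← ENNReal.coe_tsum hs]
    refine ENNReal.coe_le_coe.2 ?_
    rw [← NNReal.coe_le_coe, coe_nnnorm, NNReal.coe_tsum]
    simpa using h
  · have htop : ∑' i, (‖f i‖₊ : ℝ≥0∞) = ⊤ := by
      by_contra h
      exact hs (ENNReal.tsum_coe_ne_top_iff_summable.1 h)
    rw [htop]; exact le_top

lemma row_le (b : ℤ → ℤ → ℂ) (j : ℤ) : ∑' j', (‖b j j'‖₊ : ℝ≥0∞) ≤ normC b := by
  have h := (Equiv.subLeft j).tsum_eq (f := fun j' => (‖b j j'‖₊ : ℝ≥0∞))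
  rw [← h]
  refine ENNReal.tsum_le_tsum fun k => ?_
  exact le_iSup (fun i => (‖b i (i - k)‖₊ : ℝ≥0∞)) j

lemma nq_smul (hq : 0 < q) (r : ℝ≥0∞) (f : ℤ → ℝ≥0∞) :
    (∑' j, (r * f j) ^ q) ^ (1/q) = r * (∑' j, f j ^ q) ^ (1/q) := by
  simp_rw [ENNReal.mul_rpow_of_nonneg _ _ hq.le]
  rw [ENNReal.tsum_mul_left, ENNReal.mul_rpow_of_nonneg _ _ (by positivity : (0:ℝ) ≤ 1/q),
    rpow_rpow_inv' _ hq]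

lemma nq_matMul_le (hq : 1 ≤ q) (b : ℤ → ℤ → ℂ) (c : ℤ → ℂ) :
    nq q (matMul b c) ≤ normC b * nq q c := by
  have hq0 : (0:ℝ) < q := lt_of_lt_of_le one_pos hq
  have hpt : ∀ j, (‖matMul b c j‖₊ : ℝ≥0∞) ≤ ∑' k, rowSup b k * (‖c (j - k)‖₊ : ℝ≥0∞) := by
    intro j
    refine le_trans (enn_tsum_le _) ?_
    have h1 : ∑' j', (‖b j j' * c j'‖₊ : ℝ≥0∞) =
        ∑' k, (‖b j (j - k)‖₊ : ℝ≥0∞) * (‖c (j - k)‖₊ : ℝ≥0∞) := by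
      rw [← (Equiv.subLeft j).tsum_eq (f := fun j' => (‖b j j' * c j'‖₊ : ℝ≥0∞))]
      refine tsum_congr fun k => ?_
      simp [nnnorm_mul, ENNReal.coe_mul]
    rw [h1]
    refine ENNReal.tsum_le_tsum fun k => ?_
    exact mul_le_mul_left (le_iSup (fun i => (‖b i (i - k)‖₊ : ℝ≥0∞)) j) _
  calc nq q (matMul b c) ≤ (∑' j, (∑' k, rowSup b k * (‖c (j - k)‖₊ : ℝ≥0∞)) ^ q) ^ (1/q) := by
        unfold nq; gcongr with j; exact hpt j
    _ ≤ ∑' k, (∑' j, (rowSup b k * (‖c (j - k)‖₊ : ℝ≥0∞)) ^ q) ^ (1/q) :=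
        minkT hq fun k j => rowSup b k * (‖c (j - k)‖₊ : ℝ≥0∞)
    _ = ∑' k, rowSup b k * (∑' j, ((‖c (j - k)‖₊ : ℝ≥0∞)) ^ q) ^ (1/q) := by
        refine tsum_congr fun k => nq_smul hq0 _ _
    _ = normC b * nq q c := by
        rw [normC, ← ENNReal.tsum_mul_right]
        refine tsum_congr fun k => ?_
        congr 1
        rw [nq]
        congr 1
        exact (Equiv.subRight k).tsum_eq (f := fun j => (‖c j‖₊ : ℝ≥0∞) ^ q)
end Nq

section Overlap
variable {q : ℝ} {N₀ : ℕ}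

noncomputable def psiv (N₀ : ℕ) (m j : ℤ) : ℝ :=
  psi0 ((((j - (N₀:ℤ)*m) : ℤ) : ℝ) / (N₀ : ℝ))

lemma psiv_nonneg : 0 ≤ psiv N₀ m j := psi0_nonneg _
lemma psiv_le_one : psiv N₀ m j ≤ 1 := psi0_le_one _

lemma abs_cast_div_le {x : ℤ} (hN : 0 < N₀) (h : 2 * |x| ≤ (N₀:ℤ)) :
    |((x:ℤ):ℝ) / (N₀:ℝ)| ≤ 1/2 := by
  have hN' : (0:ℝ) < (N₀:ℝ) := by exact_mod_cast hN
  rw [abs_div, abs_of_pos hN', div_le_iff₀ hN']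
  have : (2:ℝ) * |(x:ℝ)| ≤ (N₀:ℝ) := by
    rw [← Int.cast_abs]
    exact_mod_cast h
  linarith

lemma one_le_abs_cast_div {x : ℤ} (hN : 0 < N₀) (h : (N₀:ℤ) ≤ |x|) :
    1 ≤ |((x:ℤ):ℝ) / (N₀:ℝ)| := by
  have hN' : (0:ℝ) < (N₀:ℝ) := by exact_mod_cast hN
  rw [abs_div, abs_of_pos hN', le_div_iff₀ hN', one_mul, ← Int.cast_abs]
  exact_mod_cast h

lemma psiv_eq_zero (hN : 0 < N₀) (h : (N₀:ℤ) ≤ |j - (N₀:ℤ)*m|) : psiv N₀ m j = 0 :=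
  psi0_eq_zero (one_le_abs_cast_div hN h)

lemma psiv_support (hN : 0 < N₀) {m j : ℤ} (h : psiv N₀ m j ≠ 0) :
    |j - (N₀:ℤ)*m| < (N₀:ℤ) := by
  by_contra hc
  exact h (psiv_eq_zero hN (le_of_not_gt hc))

lemma psi_sum_ge (hN : 0 < N₀) (hq : 0 ≤ q) (j : ℤ) :
    (1:ℝ≥0∞) ≤ ∑' m, (ENNReal.ofReal (psiv N₀ m j)) ^ q := by
  set m0 : ℤ := j / (N₀:ℤ) with hm0
  have hmod := Int.emod_nonneg j (by exact_mod_cast hN.ne' : (N₀:ℤ) ≠ 0)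
  have hmod2 := Int.emod_lt_of_pos j (by exact_mod_cast hN : (0:ℤ) < (N₀:ℤ))
  have hdiv := Int.mul_ediv_add_emod j (N₀:ℤ)
  set m' : ℤ := if 2 * (j % (N₀:ℤ)) ≤ (N₀:ℤ) then m0 else m0 + 1 with hm'
  have hr : j - (N₀:ℤ)*m0 = j % (N₀:ℤ) := by linarith
  have habs : 2 * |j - (N₀:ℤ)*m'| ≤ (N₀:ℤ) := by
    by_cases hc : 2 * (j % (N₀:ℤ)) ≤ (N₀:ℤ)
    · rw [hm', if_pos hc, abs_of_nonneg (by linarith : (0:ℤ) ≤ j - (N₀:ℤ)*m0)]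
      linarith
    · rw [hm', if_neg hc]
      push_neg at hc
      have h2 : j - (N₀:ℤ)*(m0+1) = (j - (N₀:ℤ)*m0) - (N₀:ℤ) := by ring
      rw [abs_of_nonpos (by linarith)]
      linarith
  have h1 : psiv N₀ m' j = 1 := psi0_eq_one (abs_cast_div_le hN habs)
  calc (1:ℝ≥0∞) = (ENNReal.ofReal (psiv N₀ m' j)) ^ q := by
        rw [h1, ENNReal.ofReal_one, ENNReal.one_rpow]
    _ ≤ _ := ENNReal.le_tsum m'

end Overlap

section Window
variable {q : ℝ} {N₀ : ℕ}

lemma window_mem (hN : 0 < N₀) {j m C : ℤ} (hC : 0 < C) (h : |j - (N₀:ℤ)*m| < C*(N₀:ℤ)) :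
    j/(N₀:ℤ) - C + 1 ≤ m ∧ m ≤ j/(N₀:ℤ) + C := by
  set m0 : ℤ := j / (N₀:ℤ) with hm0
  have hmod := Int.emod_nonneg j (by exact_mod_cast hN.ne' : (N₀:ℤ) ≠ 0)
  have hmod2 := Int.emod_lt_of_pos j (by exact_mod_cast hN : (0:ℤ) < (N₀:ℤ))
  have hdiv := Int.mul_ediv_add_emod j (N₀:ℤ)
  have hr : j - (N₀:ℤ)*m0 = j % (N₀:ℤ) := by linarith
  rw [abs_lt] at h
  constructor <;> by_contra hc <;> push_neg at hc
  · have h5 : (N₀:ℤ) * C ≤ (N₀:ℤ) * (m0 - m) := by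
      have : C ≤ m0 - m := by linarith
      exact mul_le_mul_of_nonneg_left this (by positivity)
    have hid : j - (N₀:ℤ)*m = (j - (N₀:ℤ)*m0) + (N₀:ℤ)*(m0 - m) := by ring
    nlinarith
  · have h5 : (N₀:ℤ) * (C+1) ≤ (N₀:ℤ) * (m - m0) := by
      have : C + 1 ≤ m - m0 := by linarith
      exact mul_le_mul_of_nonneg_left this (by positivity)
    have hid : j - (N₀:ℤ)*m = (j - (N₀:ℤ)*m0) - (N₀:ℤ)*(m - m0) := by ring
    nlinarith

lemma tsum_window_le (hN : 0 < N₀) {C : ℤ} (hC : 0 < C) (f : ℤ → ℝ≥0∞) (j : ℤ)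
    (h0 : ∀ m, f m ≠ 0 → |j - (N₀:ℤ)*m| < C*(N₀:ℤ)) (h1 : ∀ m, f m ≤ 1) :
    ∑' m, f m ≤ ((2*C).toNat : ℝ≥0∞) := by
  set s : Finset ℤ := Finset.Icc (j/(N₀:ℤ) - C + 1) (j/(N₀:ℤ) + C) with hs
  have h0' : ∀ m ∉ s, f m = 0 := by
    intro m hm
    by_contra hne
    obtain ⟨hl, hr⟩ := window_mem hN hC (h0 m hne)
    exact hm (Finset.mem_Icc.2 ⟨hl, hr⟩)
  rw [tsum_eq_sum h0']
  calc ∑ m ∈ s, f m ≤ ∑ _m ∈ s, (1:ℝ≥0∞) := Finset.sum_le_sum fun m _ => h1 m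
    _ = (s.card : ℝ≥0∞) := by simp
    _ = ((2*C).toNat : ℝ≥0∞) := by
        rw [hs, Int.card_Icc]
        congr 1
        omega

lemma psi_sum_le (hN : 0 < N₀) (hq : 0 < q) (j : ℤ) :
    ∑' m, (ENNReal.ofReal (psiv N₀ m j)) ^ q ≤ 2 := by
  have := tsum_window_le hN (C := 1) one_pos (fun m => (ENNReal.ofReal (psiv N₀ m j)) ^ q) j
    (fun m hne => by
      rw [one_mul]
      apply psiv_support hN
      intro h0
      exact hne (by simp only [h0, ENNReal.ofReal_zero, ENNReal.zero_rpow_of_pos hq]))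
    (fun m => by
      refine ENNReal.rpow_le_one ?_ hq.le
      exact ENNReal.ofReal_le_one.2 psiv_le_one)
  simpa using this

lemma chi_sum_le (hN : 0 < N₀) (hq : 0 < q) (c : ℤ → ℂ) (j : ℤ) :
    ∑' m, ((‖chiProj ((N₀:ℤ)*m) (2*N₀) c j‖₊ : ℝ≥0∞)) ^ q ≤ 4 * (‖c j‖₊ : ℝ≥0∞) ^ q := by
  have heq : ∀ m : ℤ, ((‖chiProj ((N₀:ℤ)*m) (2*N₀) c j‖₊ : ℝ≥0∞)) ^ q =
      (if |j - (N₀:ℤ)*m| < ((2*N₀:ℕ):ℤ) then (1:ℝ≥0∞) else 0) * (‖c j‖₊ : ℝ≥0∞) ^ q := by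
    intro m
    simp only [chiProj]
    split_ifs with h
    · rw [one_mul]
    · simp [ENNReal.zero_rpow_of_pos hq]
  calc ∑' m, ((‖chiProj ((N₀:ℤ)*m) (2*N₀) c j‖₊ : ℝ≥0∞)) ^ q
      = (∑' m, (if |j - (N₀:ℤ)*m| < ((2*N₀:ℕ):ℤ) then (1:ℝ≥0∞) else 0)) * (‖c j‖₊ : ℝ≥0∞) ^ q := by
        rw [← ENNReal.tsum_mul_right]; exact tsum_congr heq
    _ ≤ 4 * (‖c j‖₊ : ℝ≥0∞) ^ q := by
        refine mul_le_mul_left ?_ _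
        have := tsum_window_le hN (C := 2) two_pos
          (fun m => if |j - (N₀:ℤ)*m| < ((2*N₀:ℕ):ℤ) then (1:ℝ≥0∞) else 0) j
          (fun m hne => by
            split_ifs at hne with h
            · push_cast at h ⊢; linarith
            · exact absurd rfl hne)
          (fun m => by split_ifs <;> simp)
        simpa using this

end Window

section Matrices
variable {q : ℝ} {N₀ : ℕ} {a : ℤ → ℤ → ℂ} {c : ℤ → ℂ} {M : ℝ≥0∞}

noncomputable def bmat (a : ℤ → ℤ → ℂ) (s N₀ : ℕ) (m : ℤ) : ℤ → ℤ → ℂ :=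
  fun i j => trunc a s i j * (((psiv N₀ m j : ℝ) : ℂ) - ((psiv N₀ m i : ℝ) : ℂ))

lemma normC_mono {b b' : ℤ → ℤ → ℂ} (h : ∀ i j, ‖b i j‖₊ ≤ ‖b' i j‖₊) :
    normC b ≤ normC b' := by
  refine ENNReal.tsum_le_tsum fun k => iSup_le fun i => ?_
  exact le_trans (by exact_mod_cast h i (i - k)) (le_iSup (fun i => (‖b' i (i-k)‖₊ : ℝ≥0∞)) i)

lemma normC_trunc_le (a : ℤ → ℤ → ℂ) (s : ℕ) : normC (trunc a s) ≤ normC a :=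
  normC_mono fun i j => by rw [trunc]; split_ifs <;> simp

lemma normC_sub_trunc_le (a : ℤ → ℤ → ℂ) (s : ℕ) :
    normC (fun i j => a i j - trunc a s i j) ≤ normC a :=
  normC_mono fun i j => by simp only [trunc]; split_ifs <;> simp

lemma normC_bmat_le (hN : 0 < N₀) (a : ℤ → ℤ → ℂ) (s : ℕ) (hs : s ≤ N₀) (m : ℤ) :
    normC (bmat a s N₀ m) ≤ 2 * ((s : ℝ≥0∞) / (N₀ : ℝ≥0∞)) * normC a := by
  have hN' : (0:ℝ) < (N₀:ℝ) := by exact_mod_cast hN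
  have hcoef : ENNReal.ofReal (2 * (s:ℝ) / (N₀:ℝ)) = 2 * ((s : ℝ≥0∞) / (N₀ : ℝ≥0∞)) := by
    rw [ENNReal.ofReal_div_of_pos hN', show (2 * (s:ℝ)) = ((2*s : ℕ) : ℝ) by push_cast; ring,
      ENNReal.ofReal_natCast, ENNReal.ofReal_natCast]
    push_cast
    rw [mul_div_assoc]
  rw [normC, normC, ← ENNReal.tsum_mul_left]
  refine ENNReal.tsum_le_tsum fun k => iSup_le fun i => ?_
  by_cases hk : |k| < (s:ℤ)
  · have hd : (‖trunc a s i (i-k)‖₊ : ℝ≥0∞) ≤ rowSup a k := by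
      refine le_trans ?_ (le_iSup (fun i => (‖a i (i-k)‖₊ : ℝ≥0∞)) i)
      simp only [trunc]
      split_ifs <;> simp
    have hpsi : (‖(((psiv N₀ m (i-k) : ℝ) : ℂ) - ((psiv N₀ m i : ℝ) : ℂ))‖₊ : ℝ≥0∞) ≤
        2 * ((s : ℝ≥0∞) / (N₀ : ℝ≥0∞)) := by
      rw [← Complex.ofReal_sub, Complex.nnnorm_real, ← enorm_eq_nnnorm, Real.enorm_eq_ofReal_abs, ← hcoef]
      refine ENNReal.ofReal_le_ofReal ?_
      have hlip := psi0_lip ((((i - k - (N₀:ℤ)*m) : ℤ) : ℝ) / (N₀ : ℝ))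
        ((((i - (N₀:ℤ)*m) : ℤ) : ℝ) / (N₀ : ℝ))
      have harg : |(((i - k - (N₀:ℤ)*m) : ℤ) : ℝ) / (N₀ : ℝ) -
          (((i - (N₀:ℤ)*m) : ℤ) : ℝ) / (N₀ : ℝ)| ≤ (s:ℝ) / (N₀:ℝ) := by
        rw [div_sub_div_same, abs_div, abs_of_pos hN', div_le_div_iff_of_pos_right hN']
        have heq : ((i - k - (N₀:ℤ)*m : ℤ) : ℝ) - ((i - (N₀:ℤ)*m : ℤ) : ℝ) = ((-k : ℤ) : ℝ) := by
          push_cast; ring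
        rw [heq, ← Int.cast_abs, abs_neg]
        exact_mod_cast hk.le
      calc |psiv N₀ m (i-k) - psiv N₀ m i| ≤ 2 * ((s:ℝ)/(N₀:ℝ)) := by
            refine le_trans (psi0_lip _ _) ?_
            nlinarith [harg]
        _ = 2 * (s:ℝ) / (N₀:ℝ) := by ring
    calc (‖bmat a s N₀ m i (i-k)‖₊ : ℝ≥0∞)
        = (‖trunc a s i (i-k)‖₊ : ℝ≥0∞) *
          (‖(((psiv N₀ m (i-k) : ℝ) : ℂ) - ((psiv N₀ m i : ℝ) : ℂ))‖₊ : ℝ≥0∞) := by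
          rw [bmat]; push_cast [nnnorm_mul]; ring
      _ ≤ rowSup a k * (2 * ((s : ℝ≥0∞) / (N₀ : ℝ≥0∞))) := mul_le_mul' hd hpsi
      _ = 2 * ((s : ℝ≥0∞) / (N₀ : ℝ≥0∞)) * rowSup a k := by ring
  · have : trunc a s i (i - k) = 0 := by
      rw [trunc, if_neg (show ¬ |i - (i - k)| < (s:ℤ) by
        rw [show i - (i - k) = k by ring]; exact hk)]
    simp [bmat, this]

lemma summable_term {b : ℤ → ℤ → ℂ} (hb : normC b < ⊤) (hM : M ≠ ⊤)
    (hc : ∀ j', (‖c j'‖₊ : ℝ≥0∞) ≤ M) (j : ℤ) : Summable fun j' => b j j' * c j' := by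
  have h1 : ∑' j', (‖b j j' * c j'‖₊ : ℝ≥0∞) ≤ normC b * M := by
    calc ∑' j', (‖b j j' * c j'‖₊ : ℝ≥0∞) ≤ ∑' j', (‖b j j'‖₊ : ℝ≥0∞) * M := by
          refine ENNReal.tsum_le_tsum fun j' => ?_
          rw [nnnorm_mul, ENNReal.coe_mul]
          exact mul_le_mul_right (hc j') _
      _ = (∑' j', (‖b j j'‖₊ : ℝ≥0∞)) * M := ENNReal.tsum_mul_right
      _ ≤ normC b * M := mul_le_mul_left (row_le b j) _
  have h2 : ∑' j', (‖b j j' * c j'‖₊ : ℝ≥0∞) ≠ ⊤ :=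
    ne_top_of_le_ne_top (ENNReal.mul_ne_top hb.ne hM) h1
  exact Summable.of_nnnorm (ENNReal.tsum_coe_ne_top_iff_summable.1 h2)

lemma bound_of_nq (hq : 0 < q) (c : ℤ → ℂ) (j : ℤ) : (‖c j‖₊ : ℝ≥0∞) ≤ nq q c := by
  have h := ENNReal.le_tsum (f := fun j => (‖c j‖₊ : ℝ≥0∞) ^ q) j
  calc (‖c j‖₊ : ℝ≥0∞) = ((‖c j‖₊ : ℝ≥0∞) ^ q) ^ (1/q) := (rpow_rpow_inv' _ hq).symm
    _ ≤ nq q c := ENNReal.rpow_le_rpow h (by positivity)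

end Matrices

section Identity
variable {q : ℝ} {N₀ : ℕ} {a : ℤ → ℤ → ℂ} {c : ℤ → ℂ} {M : ℝ≥0∞} {s : ℕ} {m : ℤ}

lemma Psi_eq_psiv (j : ℤ) : Psi ((N₀:ℤ)*m) N₀ c j = ((psiv N₀ m j : ℝ) : ℂ) * c j := rfl

lemma Psi_bound (hc : ∀ j', (‖c j'‖₊ : ℝ≥0∞) ≤ M) (j' : ℤ) :
    (‖Psi ((N₀:ℤ)*m) N₀ c j'‖₊ : ℝ≥0∞) ≤ M := by
  rw [Psi_eq_psiv, nnnorm_mul, ENNReal.coe_mul, Complex.nnnorm_real]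
  refine le_trans (mul_le_mul' ?_ (hc j')) (by rw [one_mul])
  rw [← enorm_eq_nnnorm, Real.enorm_eq_ofReal psiv_nonneg]
  exact ENNReal.ofReal_le_one.2 psiv_le_one

lemma chiProj_Psi (hN : 0 < N₀) :
    chiProj ((N₀:ℤ)*m) N₀ (Psi ((N₀:ℤ)*m) N₀ c) = Psi ((N₀:ℤ)*m) N₀ c := by
  funext j
  rw [chiProj]
  split_ifs with h
  · rfl
  · rw [Psi_eq_psiv, psiv_eq_zero hN (le_of_not_gt h)]
    simp

lemma enorm_chiProj_le (y : ℤ) (N : ℕ) (f : ℤ → ℂ) (j : ℤ) :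
    (‖chiProj y N f j‖₊ : ℝ≥0∞) ≤ (‖f j‖₊ : ℝ≥0∞) := by
  rw [chiProj]
  split_ifs <;> simp

lemma bmat_local (hN : 0 < N₀) (hs : s ≤ N₀) (c : ℤ → ℂ) :
    matMul (bmat a s N₀ m) c = matMul (bmat a s N₀ m) (chiProj ((N₀:ℤ)*m) (2*N₀) c) := by
  funext j
  refine tsum_congr fun j' => ?_
  rw [chiProj]
  split_ifs with h
  · rfl
  · push_neg at h
    have hzero : bmat a s N₀ m j j' = 0 := by
      rw [bmat]
      by_cases hpsi : psiv N₀ m j' = 0 ∧ psiv N₀ m j = 0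
      · rw [hpsi.1, hpsi.2]; simp
      · have hj' : psiv N₀ m j' = 0 := by
          apply psiv_eq_zero hN
          have : ((2*N₀ : ℕ) : ℤ) ≤ |j' - (N₀:ℤ)*m| := h
          push_cast at this ⊢
          linarith
        have hj : psiv N₀ m j ≠ 0 := by tauto
        have hjw : |j - (N₀:ℤ)*m| < (N₀:ℤ) := psiv_support hN hj
        have htr : trunc a s j j' = 0 := by
          rw [trunc, if_neg]
          intro habs
          have h1 : |j' - (N₀:ℤ)*m| ≤ |j' - j| + |j - (N₀:ℤ)*m| := abs_sub_le _ _ _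
          have h2 : |j' - j| = |j - j'| := abs_sub_comm _ _
          have : ((2*N₀ : ℕ) : ℤ) ≤ |j' - (N₀:ℤ)*m| := h
          push_cast at this
          have hsN : (s:ℤ) ≤ (N₀:ℤ) := by exact_mod_cast hs
          linarith
        rw [htr]; simp
    rw [hzero]; simp

lemma key_identity (hN : 0 < N₀) (hA : normC a < ⊤) (hM : M ≠ ⊤)
    (hc : ∀ j', (‖c j'‖₊ : ℝ≥0∞) ≤ M) (hs : s ≤ N₀) (m j : ℤ) :
    matMul a (Psi ((N₀:ℤ)*m) N₀ c) j
      = ((psiv N₀ m j : ℝ) : ℂ) * matMul a c j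
        + ((matMul (fun i j => a i j - trunc a s i j) (Psi ((N₀:ℤ)*m) N₀ c) j
            - ((psiv N₀ m j : ℝ) : ℂ) * matMul (fun i j => a i j - trunc a s i j) c j)
          + matMul (bmat a s N₀ m) c j) := by
  have hcΨ := Psi_bound (c := c) (N₀ := N₀) (m := m) hc
  have hE : normC (fun i j => a i j - trunc a s i j) < ⊤ :=
    lt_of_le_of_lt (normC_sub_trunc_le a s) hA
  have hdivne : ((s : ℝ≥0∞) / (N₀ : ℝ≥0∞)) ≠ ⊤ :=
    (ENNReal.div_lt_top (by simp) (by exact_mod_cast hN.ne')).ne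
  have hB : normC (bmat a s N₀ m) < ⊤ := by
    refine lt_of_le_of_lt (normC_bmat_le hN a s hs m) ?_
    exact lt_top_iff_ne_top.2 (ENNReal.mul_ne_top
      (ENNReal.mul_ne_top (by norm_num) hdivne) hA.ne)
  set ψ : ℤ → ℂ := fun i => ((psiv N₀ m i : ℝ) : ℂ) with hψ
  have hsum1 : Summable fun j' => a j j' * c j' := summable_term hA hM hc j
  have hsum2 : Summable fun j' => (fun i j => a i j - trunc a s i j) j j' *
      (Psi ((N₀:ℤ)*m) N₀ c) j' := summable_term hE hM hcΨ j
  have hsum3 : Summable fun j' => (fun i j => a i j - trunc a s i j) j j' * c j' :=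
    summable_term hE hM hc j
  have hsum4 : Summable fun j' => bmat a s N₀ m j j' * c j' := summable_term hB hM hc j
  have hptw : ∀ j', a j j' * (Psi ((N₀:ℤ)*m) N₀ c) j'
      = ψ j * (a j j' * c j')
        + (((fun i j => a i j - trunc a s i j) j j' * (Psi ((N₀:ℤ)*m) N₀ c) j'
            - ψ j * ((fun i j => a i j - trunc a s i j) j j' * c j'))
          + bmat a s N₀ m j j' * c j') := by
    intro j'
    rw [Psi_eq_psiv, bmat]
    simp only [hψ]
    ring
  calc matMul a (Psi ((N₀:ℤ)*m) N₀ c) j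
      = ∑' j', (ψ j * (a j j' * c j')
        + (((fun i j => a i j - trunc a s i j) j j' * (Psi ((N₀:ℤ)*m) N₀ c) j'
            - ψ j * ((fun i j => a i j - trunc a s i j) j j' * c j'))
          + bmat a s N₀ m j j' * c j')) := tsum_congr hptw
    _ = ψ j * matMul a c j
        + ((matMul (fun i j => a i j - trunc a s i j) (Psi ((N₀:ℤ)*m) N₀ c) j
            - ψ j * matMul (fun i j => a i j - trunc a s i j) c j)
          + matMul (bmat a s N₀ m) c j) := by
        rw [Summable.tsum_add ((hsum1.mul_left _)) (((hsum2.sub (hsum3.mul_left _)).add hsum4)),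
          Summable.tsum_add (hsum2.sub (hsum3.mul_left _)) hsum4,
          Summable.tsum_sub hsum2 (hsum3.mul_left _), tsum_mul_left, tsum_mul_left]
        rfl

end Identity

section Triangle
variable {N₀ : ℕ} {a : ℤ → ℤ → ℂ} {c : ℤ → ℂ} {M : ℝ≥0∞} {s : ℕ} {m : ℤ}

lemma enorm_real_mul {r : ℝ} (hr : 0 ≤ r) (z : ℂ) :
    (‖((r:ℝ):ℂ) * z‖₊ : ℝ≥0∞) = ENNReal.ofReal r * (‖z‖₊ : ℝ≥0∞) := by
  rw [nnnorm_mul, ENNReal.coe_mul, Complex.nnnorm_real, ← enorm_eq_nnnorm, Real.enorm_eq_ofReal hr]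

lemma triangle_bound (hN : 0 < N₀) (hA : normC a < ⊤) (hM : M ≠ ⊤)
    (hc : ∀ j', (‖c j'‖₊ : ℝ≥0∞) ≤ M) (hs : s ≤ N₀) (m j : ℤ) :
    (‖chiProj ((N₀:ℤ)*m) (2*N₀) (matMul a (Psi ((N₀:ℤ)*m) N₀ c)) j‖₊ : ℝ≥0∞)
      ≤ ENNReal.ofReal (psiv N₀ m j) * (‖matMul a c j‖₊ : ℝ≥0∞)
        + ((‖matMul (fun i j => a i j - trunc a s i j) (Psi ((N₀:ℤ)*m) N₀ c) j‖₊ : ℝ≥0∞)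
          + (ENNReal.ofReal (psiv N₀ m j) *
              (‖matMul (fun i j => a i j - trunc a s i j) c j‖₊ : ℝ≥0∞)
            + (‖matMul (bmat a s N₀ m) c j‖₊ : ℝ≥0∞))) := by
  refine le_trans (enorm_chiProj_le _ _ _ _) ?_
  rw [key_identity hN hA hM hc hs m j]
  have tri : ∀ x y : ℂ, (‖x + y‖₊ : ℝ≥0∞) ≤ (‖x‖₊ : ℝ≥0∞) + (‖y‖₊ : ℝ≥0∞) := fun x y => by
    exact_mod_cast nnnorm_add_le x y
  have tri' : ∀ x y : ℂ, (‖x - y‖₊ : ℝ≥0∞) ≤ (‖x‖₊ : ℝ≥0∞) + (‖y‖₊ : ℝ≥0∞) := fun x y => by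
    exact_mod_cast nnnorm_sub_le x y
  refine le_trans (tri _ _) (add_le_add (le_of_eq (enorm_real_mul psiv_nonneg _)) ?_)
  refine le_trans (tri _ _) ?_
  rw [← add_assoc]
  exact add_le_add (le_trans (tri' _ _)
    (add_le_add le_rfl (le_of_eq (enorm_real_mul psiv_nonneg _)))) le_rfl

end Triangle

section MainEst
variable {q : ℝ} {N₀ : ℕ} {a : ℤ → ℤ → ℂ} {α : ℝ≥0∞} {s : ℕ}

lemma rpow_chain {q : ℝ} (hq0 : 0 < q) {X Y : ℝ≥0∞} (h : X ^ q ≤ Y) : X ≤ Y ^ (1/q) := by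
  rw [← rpow_rpow_inv' X hq0]
  exact ENNReal.rpow_le_rpow h (by positivity)

lemma main_estimate (hq1 : 1 ≤ q) (hN : 0 < N₀) (hA : normC a < ⊤)
    (hyp' : ∀ m : ℤ, ∀ c' : ℤ → ℂ,
      α * nq q (chiProj ((N₀:ℤ)*m) N₀ c') ≤
        nq q (chiProj ((N₀:ℤ)*m) (2*N₀) (matMul a (chiProj ((N₀:ℤ)*m) N₀ c'))))
    (hs : s ≤ N₀) (c : ℤ → ℂ) (hc : nq q c ≠ ⊤) :
    α * nq q c ≤ (2:ℝ≥0∞)^(1/q) * nq q (matMul a c)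
      + (2 * (2:ℝ≥0∞)^(1/q) * normC (fun i j => a i j - trunc a s i j)
         + 2 * (4:ℝ≥0∞)^(1/q) * (((s:ℝ≥0∞)/(N₀:ℝ≥0∞)) * normC a)) * nq q c := by
  have hq0 : (0:ℝ) < q := lt_of_lt_of_le one_pos hq1
  have hc' : ∀ j, (‖c j‖₊ : ℝ≥0∞) ≤ nq q c := bound_of_nq hq0 c
  set P : ℤ → ℤ → ℝ≥0∞ := fun m j => ENNReal.ofReal (psiv N₀ m j) with hP
  set S : (ℤ → ℂ) → ℝ≥0∞ := fun f => ∑' j, (‖f j‖₊ : ℝ≥0∞) ^ q with hS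
  have hnqS : ∀ f, nq q f = (S f) ^ (1/q) := fun f => rfl
  have hSnq : ∀ f, S f = (nq q f) ^ q := fun f => (rpow_inv_rpow' _ hq0).symm
  have hPsinorm : ∀ (m_ j : ℤ), (‖Psi ((N₀:ℤ)*m_) N₀ c j‖₊ : ℝ≥0∞) = P m_ j * (‖c j‖₊ : ℝ≥0∞) := by
    intro m_ j
    rw [Psi_eq_psiv, enorm_real_mul psiv_nonneg]
  have hP2 : ∀ j, ∑' m_, (P m_ j) ^ q ≤ 2 := fun j => psi_sum_le hN hq0 j
  -- double sums with P weights
  have hdouble : ∀ g : ℤ → ℝ≥0∞,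
      ∑' (m_ : ℤ), ∑' (j : ℤ), ((P m_ j) * g j) ^ q = ∑' (j : ℤ), (∑' m_, (P m_ j) ^ q) * (g j) ^ q := by
    intro g
    rw [ENNReal.tsum_comm]
    refine tsum_congr fun j => ?_
    rw [← ENNReal.tsum_mul_right]
    exact tsum_congr fun m_ => ENNReal.mul_rpow_of_nonneg _ _ hq0.le
  have hdouble_le : ∀ g : ℤ → ℝ≥0∞,
      ∑' (m_ : ℤ), ∑' (j : ℤ), ((P m_ j) * g j) ^ q ≤ 2 * ∑' j, (g j) ^ q := by
    intro g
    rw [hdouble, ← ENNReal.tsum_mul_left]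
    exact ENNReal.tsum_le_tsum fun j => mul_le_mul_left (hP2 j) _
  -- step 1 : per-m hypothesis
  have h1 : ∀ m_ : ℤ, α ^ q * (∑' j, ((P m_ j) * (‖c j‖₊ : ℝ≥0∞)) ^ q) ≤
      ∑' j, (‖chiProj ((N₀:ℤ)*m_) (2*N₀) (matMul a (Psi ((N₀:ℤ)*m_) N₀ c)) j‖₊ : ℝ≥0∞) ^ q := by
    intro m_
    have h := hyp' m_ (Psi ((N₀:ℤ)*m_) N₀ c)
    rw [chiProj_Psi hN] at h
    have h' := ENNReal.rpow_le_rpow h hq0.le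
    rw [ENNReal.mul_rpow_of_nonneg _ _ hq0.le, hnqS, hnqS, rpow_inv_rpow' _ hq0,
      rpow_inv_rpow' _ hq0] at h'
    refine le_trans (le_of_eq ?_) h'
    congr 1
    exact tsum_congr fun j => by rw [hPsinorm m_ j]
  -- step 2 : lower bound
  have h2 : α ^ q * S c ≤
      ∑' (m_ : ℤ), ∑' (j : ℤ),
        (‖chiProj ((N₀:ℤ)*m_) (2*N₀) (matMul a (Psi ((N₀:ℤ)*m_) N₀ c)) j‖₊ : ℝ≥0∞) ^ q := by
    have hlow : S c ≤ ∑' (m_ : ℤ), ∑' (j : ℤ), ((P m_ j) * (‖c j‖₊ : ℝ≥0∞)) ^ q := by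
      rw [hdouble]
      refine ENNReal.tsum_le_tsum fun j => ?_
      calc (‖c j‖₊ : ℝ≥0∞) ^ q = 1 * (‖c j‖₊ : ℝ≥0∞) ^ q := (one_mul _).symm
        _ ≤ (∑' m_, (P m_ j) ^ q) * (‖c j‖₊ : ℝ≥0∞) ^ q :=
            mul_le_mul_left (psi_sum_ge hN hq0.le j) _
    calc α ^ q * S c ≤ α ^ q * ∑' (m_ : ℤ), ∑' (j : ℤ), ((P m_ j) * (‖c j‖₊ : ℝ≥0∞)) ^ q :=
          mul_le_mul_right hlow _
      _ = ∑' (m_ : ℤ), α ^ q * ∑' (j : ℤ), ((P m_ j) * (‖c j‖₊ : ℝ≥0∞)) ^ q :=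
          ENNReal.tsum_mul_left.symm
      _ ≤ _ := ENNReal.tsum_le_tsum h1
  -- the four pieces
  set U : ℤ × ℤ → ℝ≥0∞ := fun z => P z.1 z.2 * (‖matMul a c z.2‖₊ : ℝ≥0∞) with hU
  set V : ℤ × ℤ → ℝ≥0∞ := fun z =>
    (‖matMul (fun i j => a i j - trunc a s i j) (Psi ((N₀:ℤ)*z.1) N₀ c) z.2‖₊ : ℝ≥0∞) with hV
  set W : ℤ × ℤ → ℝ≥0∞ := fun z =>
    P z.1 z.2 * (‖matMul (fun i j => a i j - trunc a s i j) c z.2‖₊ : ℝ≥0∞) with hW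
  set X : ℤ × ℤ → ℝ≥0∞ := fun z => (‖matMul (bmat a s N₀ z.1) c z.2‖₊ : ℝ≥0∞) with hX
  have h3 : ∑' (m_ : ℤ), ∑' (j : ℤ),
      (‖chiProj ((N₀:ℤ)*m_) (2*N₀) (matMul a (Psi ((N₀:ℤ)*m_) N₀ c)) j‖₊ : ℝ≥0∞) ^ q ≤
      ∑' z : ℤ × ℤ, (U z + (V z + (W z + X z))) ^ q := by
    rw [ENNReal.tsum_prod']
    refine ENNReal.tsum_le_tsum fun m_ => ENNReal.tsum_le_tsum fun j => ?_
    exact ENNReal.rpow_le_rpow (triangle_bound hN hA hc hc' hs m_ j) hq0.le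
  -- Minkowski
  have h4 : (∑' z : ℤ × ℤ, (U z + (V z + (W z + X z))) ^ q) ^ (1/q) ≤
      (∑' z, U z ^ q) ^ (1/q) + ((∑' z, V z ^ q) ^ (1/q) +
        ((∑' z, W z ^ q) ^ (1/q) + (∑' z, X z ^ q) ^ (1/q))) := by
    refine le_trans (mink2 hq1 U (fun z => V z + (W z + X z))) (add_le_add_right ?_ _)
    refine le_trans (mink2 hq1 V (fun z => W z + X z)) (add_le_add_right ?_ _)
    exact mink2 hq1 W X
  set x : ℝ≥0∞ := normC (fun i j => a i j - trunc a s i j) with hx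
  set y : ℝ≥0∞ := ((s:ℝ≥0∞)/(N₀:ℝ≥0∞)) * normC a with hy
  have hUb : (∑' z, U z ^ q) ^ (1/q) ≤ (2:ℝ≥0∞)^(1/q) * nq q (matMul a c) := by
    have hb : ∑' z, U z ^ q ≤ 2 * S (matMul a c) := by
      rw [ENNReal.tsum_prod']
      exact hdouble_le fun j => (‖matMul a c j‖₊ : ℝ≥0∞)
    refine le_trans (ENNReal.rpow_le_rpow hb (by positivity)) ?_
    rw [ENNReal.mul_rpow_of_nonneg _ _ (by positivity : (0:ℝ) ≤ 1/q), hnqS]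
  have hVb : (∑' z, V z ^ q) ^ (1/q) ≤ (2:ℝ≥0∞)^(1/q) * (x * nq q c) := by
    have hb : ∑' z, V z ^ q ≤ x ^ q * (2 * S c) := by
      rw [ENNReal.tsum_prod']
      calc ∑' (m_ : ℤ), ∑' (j : ℤ), V (m_, j) ^ q
          ≤ ∑' (m_ : ℤ), x ^ q * ∑' (j : ℤ), ((P m_ j) * (‖c j‖₊ : ℝ≥0∞)) ^ q := by
            refine ENNReal.tsum_le_tsum fun m_ => ?_
            have hle := nq_matMul_le hq1 (fun i j => a i j - trunc a s i j)
              (Psi ((N₀:ℤ)*m_) N₀ c)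
            have hle' := ENNReal.rpow_le_rpow hle hq0.le
            rw [hnqS, rpow_inv_rpow' _ hq0, ENNReal.mul_rpow_of_nonneg _ _ hq0.le, hnqS,
              rpow_inv_rpow' _ hq0] at hle'
            refine le_trans hle' ?_
            rw [← hx]
            refine mul_le_mul_right (le_of_eq ?_) _
            exact tsum_congr fun j => by rw [hPsinorm m_ j]
        _ = x ^ q * ∑' (m_ : ℤ), ∑' (j : ℤ), ((P m_ j) * (‖c j‖₊ : ℝ≥0∞)) ^ q :=
            ENNReal.tsum_mul_left
        _ ≤ x ^ q * (2 * S c) := mul_le_mul_right (hdouble_le _) _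
    refine le_trans (ENNReal.rpow_le_rpow hb (by positivity)) (le_of_eq ?_)
    rw [hnqS, ENNReal.mul_rpow_of_nonneg _ _ (by positivity : (0:ℝ) ≤ 1/q),
      ENNReal.mul_rpow_of_nonneg _ _ (by positivity : (0:ℝ) ≤ 1/q), rpow_rpow_inv' _ hq0]
    ring
  have hWb : (∑' z, W z ^ q) ^ (1/q) ≤ (2:ℝ≥0∞)^(1/q) * (x * nq q c) := by
    have hb : ∑' z, W z ^ q ≤ 2 * (x ^ q * S c) := by
      rw [ENNReal.tsum_prod']
      refine le_trans (hdouble_le fun j =>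
        (‖matMul (fun i j => a i j - trunc a s i j) c j‖₊ : ℝ≥0∞)) ?_
      refine mul_le_mul_right ?_ _
      have hle := nq_matMul_le hq1 (fun i j => a i j - trunc a s i j) c
      have hle' := ENNReal.rpow_le_rpow hle hq0.le
      rw [hnqS, rpow_inv_rpow' _ hq0, ENNReal.mul_rpow_of_nonneg _ _ hq0.le, hnqS,
        rpow_inv_rpow' _ hq0] at hle'
      rw [← hx] at hle'
      exact hle'
    refine le_trans (ENNReal.rpow_le_rpow hb (by positivity)) (le_of_eq ?_)
    rw [hnqS, ENNReal.mul_rpow_of_nonneg _ _ (by positivity : (0:ℝ) ≤ 1/q),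
      ENNReal.mul_rpow_of_nonneg _ _ (by positivity : (0:ℝ) ≤ 1/q), rpow_rpow_inv' _ hq0]
  have hXb : (∑' z, X z ^ q) ^ (1/q) ≤ 2 * (4:ℝ≥0∞)^(1/q) * y * nq q c := by
    have hb : ∑' z, X z ^ q ≤ (2 * y) ^ q * (4 * S c) := by
      rw [ENNReal.tsum_prod']
      calc ∑' (m_ : ℤ), ∑' (j : ℤ), X (m_, j) ^ q
          ≤ ∑' (m_ : ℤ), (2 * y) ^ q *
              ∑' (j : ℤ), (‖chiProj ((N₀:ℤ)*m_) (2*N₀) c j‖₊ : ℝ≥0∞) ^ q := by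
            refine ENNReal.tsum_le_tsum fun m_ => ?_
            have hloc : matMul (bmat a s N₀ m_) c =
                matMul (bmat a s N₀ m_) (chiProj ((N₀:ℤ)*m_) (2*N₀) c) := bmat_local hN hs c
            have hle := nq_matMul_le hq1 (bmat a s N₀ m_) (chiProj ((N₀:ℤ)*m_) (2*N₀) c)
            have hle2 : nq q (matMul (bmat a s N₀ m_) c) ≤
                (2 * y) * nq q (chiProj ((N₀:ℤ)*m_) (2*N₀) c) := by
              rw [hloc]
              refine le_trans hle (mul_le_mul_left ?_ _)
              rw [hy, ← mul_assoc]
              exact normC_bmat_le hN a s hs m_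
            have hle' := ENNReal.rpow_le_rpow hle2 hq0.le
            rw [hnqS, rpow_inv_rpow' _ hq0, ENNReal.mul_rpow_of_nonneg _ _ hq0.le, hnqS,
              rpow_inv_rpow' _ hq0] at hle'
            exact hle'
        _ = (2 * y) ^ q * ∑' (m_ : ℤ),
              ∑' (j : ℤ), (‖chiProj ((N₀:ℤ)*m_) (2*N₀) c j‖₊ : ℝ≥0∞) ^ q :=
            ENNReal.tsum_mul_left
        _ ≤ (2 * y) ^ q * (4 * S c) := by
            refine mul_le_mul_right ?_ _
            rw [ENNReal.tsum_comm, hS, ← ENNReal.tsum_mul_left]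
            exact ENNReal.tsum_le_tsum fun j => chi_sum_le hN hq0 c j
    refine le_trans (ENNReal.rpow_le_rpow hb (by positivity)) (le_of_eq ?_)
    rw [hnqS, ENNReal.mul_rpow_of_nonneg _ _ (by positivity : (0:ℝ) ≤ 1/q),
      ENNReal.mul_rpow_of_nonneg _ _ (by positivity : (0:ℝ) ≤ 1/q), rpow_rpow_inv' _ hq0]
    ring
  -- conclusion
  have hfinal : α * nq q c ≤ (2:ℝ≥0∞)^(1/q) * nq q (matMul a c) +
      ((2:ℝ≥0∞)^(1/q) * (x * nq q c) + ((2:ℝ≥0∞)^(1/q) * (x * nq q c) +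
        2 * (4:ℝ≥0∞)^(1/q) * y * nq q c)) := by
    have e1 : α * nq q c = (α ^ q * S c) ^ (1/q) := by
      rw [ENNReal.mul_rpow_of_nonneg _ _ (by positivity : (0:ℝ) ≤ 1/q), rpow_rpow_inv' _ hq0,
        hnqS]
    rw [e1]
    refine le_trans (ENNReal.rpow_le_rpow (le_trans h2 h3) (by positivity)) ?_
    exact le_trans h4 (add_le_add hUb (add_le_add hVb (add_le_add hWb hXb)))
  refine le_trans hfinal (le_of_eq ?_)
  rw [hx, hy]
  ring

end MainEst

theorem stmt13 (p : ℝ≥0∞) (hp : 1 ≤ p) (hp' : p ≠ ⊤) (a : ℤ → ℤ → ℂ) (hA : normC a < ⊤)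
    (N₀ : ℕ) (hN₀ : 0 < N₀) (α : ℝ≥0∞)
    (hα : 2 * ((5 : ℝ≥0∞) + (2 : ℝ≥0∞) ^ (1 - p.toReal)) ^ (1 / p.toReal) *
        (⨅ (s : ℕ) (_ : s ≤ N₀),
          (normC (fun i j => a i j - trunc a s i j) + ((s : ℝ≥0∞) / (N₀ : ℝ≥0∞)) * normC a)) < α)
    (hyp : ∀ m : ℤ, ∀ c : ℤ → ℂ,
      α * lpNorm p (chiProj ((N₀ : ℤ) * m) N₀ c) ≤
        lpNorm p (chiProj ((N₀ : ℤ) * m) (2 * N₀) (matMul a (chiProj ((N₀ : ℤ) * m) N₀ c)))) :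
    ∃ C₁ : ℝ≥0∞, C₁ ≠ 0 ∧ ∀ c : ℤ → ℂ, lpNorm p c < ⊤ →
      C₁ * lpNorm p c ≤ lpNorm p (matMul a c) := by 
  have hq1 : 1 ≤ p.toReal := by
    have := ENNReal.toReal_mono hp' hp
    simpa using this
  set q := p.toReal with hqdef
  have hq0 : (0:ℝ) < q := lt_of_lt_of_le one_pos hq1
  have hyp' : ∀ m : ℤ, ∀ c' : ℤ → ℂ,
      α * nq q (chiProj ((N₀:ℤ)*m) N₀ c') ≤
        nq q (chiProj ((N₀:ℤ)*m) (2*N₀) (matMul a (chiProj ((N₀:ℤ)*m) N₀ c'))) := by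
    intro m c'
    have h := hyp m c'
    rwa [lpNorm_eq_nq hp hp', lpNorm_eq_nq hp hp'] at h
  -- α is finite and nonzero
  have hα0 : α ≠ 0 := (lt_of_le_of_lt zero_le hα).ne'
  have hαle : α ≤ normC a := by
    set δ : ℤ → ℂ := fun j => if j = 0 then 1 else 0 with hδ
    have hnqδ : nq q δ = 1 := by
      have hterm : ∀ j : ℤ, (‖δ j‖₊ : ℝ≥0∞) ^ q = if j = 0 then 1 else 0 := by
        intro j
        rw [hδ]
        dsimp only
        split_ifs <;> simp [ENNReal.zero_rpow_of_pos hq0]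
      rw [nq, tsum_congr hterm, tsum_ite_eq]
      exact ENNReal.one_rpow _
    have hfix : chiProj ((N₀:ℤ)*0) N₀ δ = δ := by
      funext j
      rw [chiProj]
      split_ifs with h
      · rfl
      · have hj : j ≠ 0 := by
          rintro rfl
          refine h ?_
          simpa using (by exact_mod_cast hN₀ : (0:ℤ) < (N₀:ℤ))
        rw [hδ]
        simp [hj]
    have h := hyp' 0 δ
    rw [hfix, hnqδ, mul_one] at h
    refine le_trans h ?_
    refine le_trans (nq_mono hq0 (fun j => enorm_chiProj_le _ _ _ j)) ?_
    calc nq q (matMul a δ) ≤ normC a * nq q δ := nq_matMul_le hq1 a δ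
      _ = normC a := by rw [hnqδ, mul_one]
  have hαtop : α ≠ ⊤ := ne_top_of_le_ne_top hA.ne hαle
  -- the constant K
  set K : ℝ≥0∞ := 2 * ((5 : ℝ≥0∞) + (2:ℝ≥0∞) ^ (1 - q)) ^ (1/q) with hK
  have h2q : (2:ℝ≥0∞) ^ (1 - q) ≤ 2 := by
    calc (2:ℝ≥0∞)^(1-q) ≤ (2:ℝ≥0∞)^(1:ℝ) :=
        ENNReal.rpow_le_rpow_of_exponent_le (by norm_num) (by linarith)
      _ = 2 := ENNReal.rpow_one _
  have hbase_ne_top : ((5:ℝ≥0∞) + (2:ℝ≥0∞)^(1-q)) ≠ ⊤ := by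
    refine ENNReal.add_ne_top.2 ⟨by norm_num, ne_top_of_le_ne_top (by norm_num) h2q⟩
  have hKtop : K ≠ ⊤ :=
    ENNReal.mul_ne_top (by norm_num) (ENNReal.rpow_ne_top_of_nonneg (by positivity) hbase_ne_top)
  have hK0 : K ≠ 0 := by
    refine mul_ne_zero (by norm_num) ?_
    exact (ENNReal.rpow_pos (by norm_num) hbase_ne_top).ne'
  -- choose the truncation level s
  have hinf : (⨅ (s : ℕ) (_ : s ≤ N₀),
      (normC (fun i j => a i j - trunc a s i j) + ((s:ℝ≥0∞)/(N₀:ℝ≥0∞)) * normC a)) < α / K := by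
    have h := hα
    calc (⨅ (s : ℕ) (_ : s ≤ N₀),
        (normC (fun i j => a i j - trunc a s i j) + ((s:ℝ≥0∞)/(N₀:ℝ≥0∞)) * normC a))
        = K⁻¹ * (K * (⨅ (s : ℕ) (_ : s ≤ N₀),
          (normC (fun i j => a i j - trunc a s i j) + ((s:ℝ≥0∞)/(N₀:ℝ≥0∞)) * normC a))) := by
          rw [← mul_assoc, ENNReal.inv_mul_cancel hK0 hKtop, one_mul]
      _ < K⁻¹ * α := by
          rw [ENNReal.mul_lt_mul_iff_right (ENNReal.inv_ne_zero.2 hKtop) (ENNReal.inv_ne_top.2 hK0)]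
          exact h
      _ = α / K := by rw [div_eq_mul_inv, mul_comm]
  obtain ⟨s, hsN, hgs⟩ : ∃ s : ℕ, s ≤ N₀ ∧
      (normC (fun i j => a i j - trunc a s i j) + ((s:ℝ≥0∞)/(N₀:ℝ≥0∞)) * normC a) < α / K := by
    obtain ⟨s, hs'⟩ := iInf_lt_iff.1 hinf
    obtain ⟨hle, hlt⟩ := iInf_lt_iff.1 hs'
    exact ⟨s, hle, hlt⟩
  set x : ℝ≥0∞ := normC (fun i j => a i j - trunc a s i j) with hx
  set y : ℝ≥0∞ := ((s:ℝ≥0∞)/(N₀:ℝ≥0∞)) * normC a with hy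
  have hβα : K * (x + y) < α := by
    calc K * (x + y) < K * (α / K) := by
          rw [ENNReal.mul_lt_mul_iff_right hK0 hKtop]
          exact hgs
      _ = α := ENNReal.mul_div_cancel hK0 hKtop
  -- coefficient comparison
  have hcoefA : 2 * (2:ℝ≥0∞)^(1/q) ≤ K := by
    rw [hK]
    refine mul_le_mul_right ?_ 2
    refine ENNReal.rpow_le_rpow ?_ (by positivity)
    calc (2:ℝ≥0∞) ≤ 5 := by norm_num
      _ ≤ 5 + (2:ℝ≥0∞)^(1-q) := le_self_add
  have hcoefB : 2 * (4:ℝ≥0∞)^(1/q) ≤ K := by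
    rw [hK]
    refine mul_le_mul_right ?_ 2
    refine ENNReal.rpow_le_rpow ?_ (by positivity)
    calc (4:ℝ≥0∞) ≤ 5 := by norm_num
      _ ≤ 5 + (2:ℝ≥0∞)^(1-q) := le_self_add
  -- the stability constant
  set D : ℝ≥0∞ := (2:ℝ≥0∞)^(1/q) with hD
  have hD0 : D ≠ 0 := (ENNReal.rpow_pos (by norm_num) (by norm_num)).ne'
  have hDtop : D ≠ ⊤ := ENNReal.rpow_ne_top_of_nonneg (by positivity) (by norm_num)
  refine ⟨(α - K * (x + y)) / D, ?_, ?_⟩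
  · have hsub : α - K * (x + y) ≠ 0 := by
      intro h
      exact absurd (tsub_eq_zero_iff_le.1 h) (not_le.2 hβα)
    exact (ENNReal.div_pos hsub hDtop).ne'
  · intro c hclt
    rw [lpNorm_eq_nq hp hp'] at hclt
    rw [lpNorm_eq_nq hp hp', lpNorm_eq_nq hp hp']
    have hme := main_estimate hq1 hN₀ hA hyp' hsN c hclt.ne
    have hme2 : α * nq q c ≤ D * nq q (matMul a c) + (K * (x + y)) * nq q c := by
      refine le_trans hme (add_le_add le_rfl (mul_le_mul_left ?_ _))
      rw [mul_add K x y]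
      exact add_le_add (mul_le_mul_left hcoefA _) (mul_le_mul_left hcoefB _)
    have h6 : (α - K * (x + y)) * nq q c ≤ D * nq q (matMul a c) := by
      rw [ENNReal.sub_mul (fun _ _ => hclt.ne), tsub_le_iff_right]
      exact hme2
    calc (α - K * (x + y)) / D * nq q c
        = (α - K * (x + y)) * nq q c * D⁻¹ := by rw [div_eq_mul_inv]; ring
      _ ≤ D * nq q (matMul a c) * D⁻¹ := mul_le_mul_left h6 _
      _ = nq q (matMul a c) := by
          rw [mul_comm D _, mul_assoc, ENNReal.mul_inv_cancel hD0 hDtop, mul_one]
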